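/- Uniqueness of the single-block Lauricella connection: let V be the (1,1)-tensor field in coordinates u^1,...,u^n given by V^i_j = u^{i-j+1} for i > j, V^i_i = (1 − nε₁)u^1, V^i_j = 0 for i < j (lower-triangular Toeplitz), with u^2 ≠ 0. Then there is at most one torsionless connection ∇ with Christoffel symbols Γ^i_{jk} satisfying ∇e = 0 (i.e. Γ^i_{j1} = Γ^i_{1j} = 0) and d_∇V = 0 (i.e. ∂_i V^k_j + Γ^k_{il}V^l_j = ∂_j V^k_i + Γ^k_{jl}V^l_i for all i,j,k). -/
import Mathlib


/-- Partial derivative of `f` with respect to the variable `u^i` at the point `x`. -/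
noncomputable def pd (i : ℕ) (f : (ℕ → ℝ) → ℝ) (x : ℕ → ℝ) : ℝ :=
  deriv (fun t => f (Function.update x i t)) (x i)

private lemma meas1 (P x y m : ℕ) (hm : P + x < m + 1) (h : y < x) : P + y < m := by omega

private lemma meas2 (n a l x y m : ℕ) (hm : (n-a)*(n+2) + x < m + 1) (hal : a < l)
    (hln : l ≤ n) (hy : y ≤ n + 1) : (n-l)*(n+2) + y < m := by
  have h1 : n - l + 1 ≤ n - a := by omega
  have h2 : (n-l+1)*(n+2) ≤ (n-a)*(n+2) := Nat.mul_le_mul_right _ h1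
  have h3 : (n-l)*(n+2) + y < (n-l+1)*(n+2) := by
    have he : (n-l+1)*(n+2) = (n-l)*(n+2) + (n+2) := by ring
    rw [he]
    exact Nat.add_lt_add_left (by omega) _
  have hQ : (n-a)*(n+2) ≤ m := Nat.le_of_lt_succ (lt_of_le_of_lt (Nat.le_add_right _ _) hm)
  exact lt_of_lt_of_le (lt_of_lt_of_le h3 h2) hQ

/-- **uniqueness of the single-block Lauricella connection.** Let `V` be
the lower-triangular Toeplitz tensor `V^i_j = u^{i-j+1}` for `i > j`,
`V^i_i = (1 − nε₁)u¹`, `V^i_j = 0` for `i < j` (indices 1-based).  Any two torsionless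
connections `Γ`, `Γ'` with `∇e = 0` (i.e. `Γ^i_{j1} = 0`) satisfying `d_∇V = 0` agree
wherever `u² ≠ 0`. -/
theorem statement18 (n : ℕ) (ε₁ : ℝ)
    (V : ℕ → ℕ → (ℕ → ℝ) → ℝ)
    (hV : ∀ (k j : ℕ) x, V k j x =
      if j < k then x (k - j + 1)
      else if k = j then (1 - (n : ℝ) * ε₁) * x 1 else 0)
    (Γ Γ' : ℕ → ℕ → ℕ → (ℕ → ℝ) → ℝ)
    (hsym : ∀ k i j x, Γ k i j x = Γ k j i x)
    (hsym' : ∀ k i j x, Γ' k i j x = Γ' k j i x)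
    (he : ∀ k j x, Γ k j 1 x = 0)
    (he' : ∀ k j x, Γ' k j 1 x = 0)
    (hdV : ∀ k i j : ℕ, 1 ≤ k → k ≤ n → 1 ≤ i → i ≤ n → 1 ≤ j → j ≤ n → ∀ x,
      pd i (V k j) x + (∑ l ∈ Finset.Icc 1 n, Γ k i l x * V l j x)
        - pd j (V k i) x - (∑ l ∈ Finset.Icc 1 n, Γ k j l x * V l i x) = 0)
    (hdV' : ∀ k i j : ℕ, 1 ≤ k → k ≤ n → 1 ≤ i → i ≤ n → 1 ≤ j → j ≤ n → ∀ x,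
      pd i (V k j) x + (∑ l ∈ Finset.Icc 1 n, Γ' k i l x * V l j x)
        - pd j (V k i) x - (∑ l ∈ Finset.Icc 1 n, Γ' k j l x * V l i x) = 0) :
    ∀ k i j : ℕ, 1 ≤ k → k ≤ n → 1 ≤ i → i ≤ n → 1 ≤ j → j ≤ n →
      ∀ x : ℕ → ℝ, x 2 ≠ 0 → Γ k i j x = Γ' k i j x := by
  intro k i j hk1 hkn hi1 hin hj1 hjn x hx2
  have hD1 : ∀ a, Γ k a 1 x - Γ' k a 1 x = 0 := fun a => by rw [he, he']; ring
  have hDsym : ∀ a b, Γ k a b x - Γ' k a b x = Γ k b a x - Γ' k b a x := fun a b => by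
    rw [hsym, hsym']
  have hE : ∀ p q, 1 ≤ p → p ≤ n → 1 ≤ q → q ≤ n →
      ∑ l ∈ Finset.Icc 1 n, (Γ k p l x - Γ' k p l x) * V l q x
        = ∑ l ∈ Finset.Icc 1 n, (Γ k q l x - Γ' k q l x) * V l p x := by
    intro p q hp1 hpn hq1 hqn
    have h1 := hdV k p q hk1 hkn hp1 hpn hq1 hqn x
    have h2 := hdV' k p q hk1 hkn hp1 hpn hq1 hqn x
    simp only [sub_mul, Finset.sum_sub_distrib]
    linarith
  -- main induction: Γ k a b x - Γ' k a b x = 0 for 1 ≤ b ≤ a ≤ n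
  have main : ∀ m a b, (n - a) * (n + 2) + (a - b) < m → 1 ≤ b → b ≤ a → a ≤ n →
      Γ k a b x - Γ' k a b x = 0 := by
    intro m
    induction m with
    | zero => intro a b h; omega
    | succ m ih =>
      intro a b hm hb1 hba han
      rcases eq_or_lt_of_le hb1 with hb | hb2
      · rw [← hb]; exact hD1 a
      have hbn : b ≤ n := le_trans hba han
      have heq := hE a (b-1) (le_trans hb1 hba) han (by omega) (by omega)
      have hS1 : ∀ l ∈ Finset.Icc 1 n, (Γ k a l x - Γ' k a l x) * V l (b-1) x
          = (if l = b then x 2 * (Γ k a b x - Γ' k a b x) else 0)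
            + (if l = b-1 then ((1 - (n : ℝ) * ε₁) * x 1) *
                (Γ k a (b-1) x - Γ' k a (b-1) x) else 0) := by
        intro l hl
        simp only [Finset.mem_Icc] at hl
        rcases lt_trichotomy l (b-1) with h | h | h
        · have hV0 : V l (b-1) x = 0 := by
            rw [hV, if_neg (by omega), if_neg (by omega)]
          rw [hV0, if_neg (by omega), if_neg (by omega)]; ring
        · have hVc : V l (b-1) x = (1 - (n : ℝ) * ε₁) * x 1 := by
            rw [hV, if_neg (by omega), if_pos h]
          subst h
          rw [hVc, if_neg (by omega), if_pos rfl]; ring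
        · rcases eq_or_lt_of_le (show b ≤ l by omega) with h2 | h2
          · have hVx : V l (b-1) x = x 2 := by
              rw [hV, if_pos (by omega)]
              congr 1; omega
            subst h2
            rw [hVx, if_pos rfl, if_neg (by omega)]; ring
          · have hd0 : Γ k a l x - Γ' k a l x = 0 := by
              rcases le_or_gt l a with hla | hla
              · exact ih a l (meas1 _ _ _ _ hm (by omega)) (by omega) hla han
              · rw [hDsym]
                exact ih l a (meas2 n a l _ _ m hm hla hl.2 (by omega)) (le_trans hb1 hba)
                  (le_of_lt hla) hl.2
            rw [hd0, if_neg (by omega), if_neg (by omega)]; ring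
      have hS2 : ∀ l ∈ Finset.Icc 1 n, (Γ k (b-1) l x - Γ' k (b-1) l x) * V l a x
          = (if l = a then ((1 - (n : ℝ) * ε₁) * x 1) *
              (Γ k (b-1) a x - Γ' k (b-1) a x) else 0) := by
        intro l hl
        simp only [Finset.mem_Icc] at hl
        rcases lt_trichotomy l a with h | h | h
        · have hV0 : V l a x = 0 := by rw [hV, if_neg (by omega), if_neg (by omega)]
          rw [hV0, if_neg (by omega)]; ring
        · have hVc : V l a x = (1 - (n : ℝ) * ε₁) * x 1 := by
            rw [hV, if_neg (by omega), if_pos h]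
          subst h
          rw [hVc, if_pos rfl]; ring
        · have hd0 : Γ k (b-1) l x - Γ' k (b-1) l x = 0 := by
            rw [hDsym]
            exact ih l (b-1) (meas2 n a l _ _ m hm h hl.2 (by omega)) (by omega)
              (by omega) hl.2
          rw [hd0, if_neg (by omega)]; ring
      rw [Finset.sum_congr rfl hS1, Finset.sum_congr rfl hS2, Finset.sum_add_distrib,
        Finset.sum_ite_eq', Finset.sum_ite_eq', Finset.sum_ite_eq'] at heq
      rw [if_pos (by simp only [Finset.mem_Icc]; omega),
        if_pos (by simp only [Finset.mem_Icc]; omega),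
        if_pos (by simp only [Finset.mem_Icc]; omega)] at heq
      rw [hDsym a (b-1)] at heq
      have : x 2 * (Γ k a b x - Γ' k a b x) = 0 := by linarith
      rcases mul_eq_zero.mp this with h | h
      · exact absurd h hx2
      · exact h
  -- conclude
  have final : ∀ a b, 1 ≤ b → b ≤ a → a ≤ n → Γ k a b x - Γ' k a b x = 0 := fun a b hb hba han =>
    main ((n - a) * (n + 2) + (a - b) + 1) a b (Nat.lt_succ_self _) hb hba han
  rcases le_or_gt j i with hji | hij
  · have := final i j hj1 hji hin
    linarith
  · have := final j i hi1 (le_of_lt hij) hjn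
    rw [hsym, hsym']
    linarith
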